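/- Let Y be a disjunction-of-conjunctions gate over disjoint blocks B_1,…,B_K, and let v ∈ {0,1}^n be an actual input state with at least one block all-ones in v. Then a nonempty occurrence x = v|S has actual effect {Y = 1} (i.e., α_e(x) > 0) if and only if v_i = 1 for every i ∈ S and either S contains no complete block B_j, or S is exactly equal to a single block B_j. Every other nonempty occurrence — in particular any occurrence fixing an input to 0, and any all-ones occurrence that properly contains a complete block (overdetermination) — is reducible, α_e(x) ≤ 0. -/

import Mathlib

open Finset

/-- Disjunction-of-conjunctions gate over blocks `B 1, …, B K`: outputs `1` iff some block has
all of its inputs in state `1`. -/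
def DOC {n K : ℕ} (B : Fin K → Finset (Fin n)) (u : Fin n → Bool) : Bool :=
  decide (∃ j, ∀ i ∈ B j, u i = true)

/-- Effect probability `π(y | v|S) = 2^{-(n-|S|)} · #{u : u agrees with v on S ∧ Y u = y}`. -/
noncomputable def effProb {n : ℕ} (Y : (Fin n → Bool) → Bool) (v : Fin n → Bool)
    (S : Finset (Fin n)) (y : Bool) : ℝ :=
  ((univ.filter fun u : Fin n → Bool => (∀ i ∈ S, u i = v i) ∧ Y u = y).card : ℝ) /
    2 ^ (n - S.card)

/-- Irreducible effect ratio of a nonempty occurrence `v|S` on outcome `y`: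
`α_e = log₂( π(y | v|S) / max_{T ⊊ S} π(y | v|T) )`. -/
noncomputable def alphaE {n : ℕ} (Y : (Fin n → Bool) → Bool) (v : Fin n → Bool)
    (S : Finset (Fin n)) (hS : S.Nonempty) (y : Bool) : ℝ :=
  Real.logb 2 (effProb Y v S y /
    S.ssubsets.sup' ⟨∅, Finset.empty_mem_ssubsets hS⟩ (fun T => effProb Y v T y))

namespace DocAux

variable {n K : ℕ}

lemma doc_iff (B : Fin K → Finset (Fin n)) (u : Fin n → Bool) :
    DOC B u = true ↔ ∃ j, ∀ i ∈ B j, u i = true := by simp [DOC]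

lemma doc_mono (B : Fin K → Finset (Fin n)) {u u' : Fin n → Bool}
    (h : ∀ k, u k = true → u' k = true) (hu : DOC B u = true) : DOC B u' = true := by
  rw [doc_iff] at hu ⊢
  obtain ⟨j, hj⟩ := hu
  exact ⟨j, fun i hi => h i (hj i hi)⟩

/-- The set of states agreeing with `v` on `S`. -/
def Ag (v : Fin n → Bool) (S : Finset (Fin n)) : Finset (Fin n → Bool) :=
  univ.filter fun u => ∀ i ∈ S, u i = v i

lemma flip_mem_Ag {v : Fin n → Bool} {S : Finset (Fin n)} {a : Fin n} (ha : a ∉ S)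
    {u : Fin n → Bool} (hu : u ∈ Ag v S) (b : Bool) : Function.update u a b ∈ Ag v S := by
  simp only [Ag, mem_filter, mem_univ, true_and] at hu ⊢
  intro i hi
  rw [Function.update_of_ne (by rintro rfl; exact ha hi)]
  exact hu i hi

lemma card_filter_eq (v : Fin n → Bool) {S : Finset (Fin n)} {a : Fin n} (ha : a ∉ S) :
    ((Ag v S).filter fun u => u a = true).card =
      ((Ag v S).filter fun u => u a = false).card := by
  apply Finset.card_bij (fun u _ => Function.update u a false)
  · intro u hu
    simp only [mem_filter] at hu ⊢
    exact ⟨flip_mem_Ag ha hu.1 false, Function.update_self a false u⟩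
  · intro u hu u' hu' h
    simp only [mem_filter] at hu hu'
    funext k
    by_cases hk : k = a
    · subst hk; rw [hu.2, hu'.2]
    · have := congrFun h k
      rwa [Function.update_of_ne hk, Function.update_of_ne hk] at this
  · intro u hu
    simp only [mem_filter] at hu
    refine ⟨Function.update u a true, ?_, ?_⟩
    · simp only [mem_filter]
      exact ⟨flip_mem_Ag ha hu.1 true, Function.update_self a true u⟩
    · rw [Function.update_idem, ← hu.2, Function.update_eq_self]

lemma Ag_insert (v : Fin n → Bool) (S : Finset (Fin n)) (a : Fin n) :
    Ag v (insert a S) = (Ag v S).filter fun u => u a = v a := by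
  ext u
  simp only [Ag, mem_filter, mem_univ, true_and, Finset.forall_mem_insert]
  tauto

lemma card_Ag_insert (v : Fin n → Bool) {S : Finset (Fin n)} {a : Fin n} (ha : a ∉ S) :
    (Ag v S).card = 2 * (Ag v (insert a S)).card := by
  rw [Ag_insert]
  have hsplit := Finset.card_filter_add_card_filter_not
    (s := Ag v S) (p := fun u => u a = true)
  have hneg : ((Ag v S).filter fun u => ¬ u a = true) =
      (Ag v S).filter fun u => u a = false := by
    apply filter_congr; intro u _; simp
  rw [hneg] at hsplit
  cases hva : v a
  · rw [← hsplit, ← card_filter_eq v ha]; ring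
  · rw [← hsplit, card_filter_eq v ha]; ring

lemma card_Ag (v : Fin n → Bool) (S : Finset (Fin n)) :
    (Ag v S).card * 2 ^ S.card = 2 ^ n := by
  induction S using Finset.induction_on with
  | empty =>
    have : Ag v (∅ : Finset (Fin n)) = univ := by
      ext u; simp [Ag]
    rw [this, card_empty, pow_zero, mul_one, Finset.card_univ]
    simp [Fintype.card_fun]
  | @insert a S ha ih =>
    rw [card_insert_of_notMem ha, pow_succ, ← ih, card_Ag_insert v ha]
    ring

lemma card_Ag_eq (v : Fin n → Bool) (S : Finset (Fin n)) :
    (Ag v S).card = 2 ^ (n - S.card) := by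
  have hcard : S.card ≤ n := by
    simpa using Finset.card_le_univ S
  have h := card_Ag v S
  have h2 : (2:ℕ) ^ (n - S.card) * 2 ^ S.card = 2 ^ n := by
    rw [← pow_add]; congr 1; omega
  have := h.trans h2.symm
  exact Nat.eq_of_mul_eq_mul_right (by positivity) this

/-- The set counted by the numerator of `effProb (DOC B) v S true`. -/
def NY (B : Fin K → Finset (Fin n)) (v : Fin n → Bool) (S : Finset (Fin n)) :
    Finset (Fin n → Bool) :=
  univ.filter fun u => (∀ i ∈ S, u i = v i) ∧ DOC B u = true

lemma NY_subset_Ag (B : Fin K → Finset (Fin n)) (v : Fin n → Bool) (S : Finset (Fin n)) :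
    NY B v S ⊆ Ag v S := by
  intro u hu
  simp only [NY, Ag, mem_filter, mem_univ, true_and] at hu ⊢
  exact hu.1

lemma NY_split (B : Fin K → Finset (Fin n)) (v : Fin n → Bool) (S : Finset (Fin n)) (a : Fin n) :
    (NY B v S).card = ((NY B v S).filter fun u => u a = true).card +
      ((NY B v S).filter fun u => u a = false).card := by
  have hsplit := Finset.card_filter_add_card_filter_not
    (s := NY B v S) (p := fun u => u a = true)
  have hneg : ((NY B v S).filter fun u => ¬ u a = true) =
      (NY B v S).filter fun u => u a = false := by
    apply filter_congr; intro u _; simp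
  rw [hneg] at hsplit
  exact hsplit.symm

lemma NY_insert (B : Fin K → Finset (Fin n)) (v : Fin n → Bool) (S : Finset (Fin n)) (a : Fin n) :
    NY B v (insert a S) = (NY B v S).filter fun u => u a = v a := by
  ext u
  simp only [NY, mem_filter, mem_univ, true_and, Finset.forall_mem_insert]
  tauto

lemma NY_flip_le (B : Fin K → Finset (Fin n)) (v : Fin n → Bool) {S : Finset (Fin n)} {a : Fin n}
    (ha : a ∉ S) :
    ((NY B v S).filter fun u => u a = false).card ≤
      ((NY B v S).filter fun u => u a = true).card := by
  apply Finset.card_le_card_of_injOn (fun u => Function.update u a true)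
  · intro u hu
    simp only [NY, mem_coe, mem_filter, mem_univ, true_and] at hu ⊢
    refine ⟨⟨?_, ?_⟩, Function.update_self a true u⟩
    · intro i hi
      rw [Function.update_of_ne (by rintro rfl; exact ha hi)]
      exact hu.1.1 i hi
    · refine doc_mono B (fun k hk => ?_) hu.1.2
      by_cases hka : k = a
      · rw [hka]; exact Function.update_self a true u
      · rwa [Function.update_of_ne hka]
  · intro u hu u' hu' h
    simp only [coe_filter, Set.mem_setOf_eq] at hu hu'
    have h' : ∀ k, Function.update u a true k = Function.update u' a true k :=
      fun k => congrFun h k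
    funext k
    by_cases hk : k = a
    · subst hk; rw [hu.2, hu'.2]
    · have := h' k
      rwa [Function.update_of_ne hk, Function.update_of_ne hk] at this

lemma NY_flip_lt (B : Fin K → Finset (Fin n)) (v : Fin n → Bool) {S : Finset (Fin n)} {a : Fin n}
    (ha : a ∉ S) {w : Fin n → Bool}
    (hw : w ∈ (NY B v S).filter fun u => u a = true)
    (hw2 : DOC B (Function.update w a false) = false) :
    ((NY B v S).filter fun u => u a = false).card <
      ((NY B v S).filter fun u => u a = true).card := by
  have hle : ((NY B v S).filter fun u => u a = false).card ≤
      (((NY B v S).filter fun u => u a = true).erase w).card := by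
    apply Finset.card_le_card_of_injOn (fun u => Function.update u a true)
    · intro u hu
      simp only [NY, mem_coe, mem_filter, mem_univ, true_and] at hu
      rw [Finset.mem_coe, Finset.mem_erase]
      constructor
      · intro hcontra
        have hu_eq : u = Function.update w a false := by
          rw [← hcontra, Function.update_idem, ← hu.2, Function.update_eq_self]
        rw [hu_eq] at hu
        rw [hu.1.2] at hw2
        exact absurd hw2 (by simp)
      · simp only [NY, mem_filter, mem_univ, true_and]
        refine ⟨⟨?_, ?_⟩, Function.update_self a true u⟩
        · intro i hi
          rw [Function.update_of_ne (by rintro rfl; exact ha hi)]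
          exact hu.1.1 i hi
        · refine doc_mono B (fun k hk => ?_) hu.1.2
          by_cases hka : k = a
          · rw [hka]; exact Function.update_self a true u
          · rwa [Function.update_of_ne hka]
    · intro u hu u' hu' h
      simp only [coe_filter, Set.mem_setOf_eq] at hu hu'
      have h' : ∀ k, Function.update u a true k = Function.update u' a true k :=
        fun k => congrFun h k
      funext k
      by_cases hk : k = a
      · subst hk; rw [hu.2, hu'.2]
      · have := h' k
        rwa [Function.update_of_ne hk, Function.update_of_ne hk] at this
  exact hle.trans_lt (Finset.card_erase_lt_of_mem hw)

end DocAux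

namespace DocAux

variable {n K : ℕ} (B : Fin K → Finset (Fin n)) (v : Fin n → Bool)

lemma effProb_eq (S : Finset (Fin n)) :
    effProb (DOC B) v S true = ((NY B v S).card : ℝ) / 2 ^ (n - S.card) := rfl

lemma card_le (S : Finset (Fin n)) : S.card ≤ n := by simpa using Finset.card_le_univ S

lemma eff_nonneg (S : Finset (Fin n)) : 0 ≤ effProb (DOC B) v S true := by
  rw [effProb_eq]; positivity

lemma eff_le_one (S : Finset (Fin n)) : effProb (DOC B) v S true ≤ 1 := by
  rw [effProb_eq, div_le_one (by positivity)]
  have h := Finset.card_le_card (NY_subset_Ag B v S)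
  rw [card_Ag_eq] at h
  calc ((NY B v S).card : ℝ) ≤ ((2 ^ (n - S.card) : ℕ) : ℝ) := by exact_mod_cast h
    _ = 2 ^ (n - S.card) := by push_cast; ring

lemma eff_pos (S : Finset (Fin n)) (hex : ∃ u, (∀ i ∈ S, u i = v i) ∧ DOC B u = true) :
    0 < effProb (DOC B) v S true := by
  rw [effProb_eq]
  apply div_pos _ (by positivity)
  have : (NY B v S).Nonempty := by
    obtain ⟨u, hu⟩ := hex
    exact ⟨u, by simp only [NY, mem_filter, mem_univ, true_and]; exact hu⟩
  have := Finset.card_pos.mpr this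
  exact_mod_cast this

lemma eff_eq_one (S : Finset (Fin n)) (h : ∀ u ∈ Ag v S, DOC B u = true) :
    effProb (DOC B) v S true = 1 := by
  have hNY : NY B v S = Ag v S := by
    apply Finset.Subset.antisymm (NY_subset_Ag B v S)
    intro u hu
    simp only [NY, Ag, mem_filter, mem_univ, true_and] at hu ⊢
    exact ⟨hu, h u (by simp only [Ag, mem_filter, mem_univ, true_and]; exact hu)⟩
  rw [effProb_eq, hNY, card_Ag_eq]
  rw [div_eq_one_iff_eq (by positivity)]
  push_cast; ring

lemma eff_lt_one (S : Finset (Fin n)) (hw : ∃ u ∈ Ag v S, DOC B u = false) :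
    effProb (DOC B) v S true < 1 := by
  obtain ⟨u₀, hu₀, hu₀'⟩ := hw
  rw [effProb_eq, div_lt_one (by positivity)]
  have h : NY B v S ⊂ Ag v S := by
    refine ⟨NY_subset_Ag B v S, fun hsub => ?_⟩
    have := hsub hu₀
    simp only [NY, mem_filter, mem_univ, true_and] at this
    rw [this.2] at hu₀'
    exact absurd hu₀' (by simp)
  have hlt := Finset.card_lt_card h
  rw [card_Ag_eq] at hlt
  calc ((NY B v S).card : ℝ) < ((2 ^ (n - S.card) : ℕ) : ℝ) := by exact_mod_cast hlt
    _ = 2 ^ (n - S.card) := by push_cast; ring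

lemma eff_cmp {S : Finset (Fin n)} {a : Fin n} (ha : a ∉ S) :
    effProb (DOC B) v S true =
      ((NY B v S).card : ℝ) / (2 * 2 ^ (n - (insert a S).card)) := by
  rw [effProb_eq]
  congr 1
  have h1 : (insert a S).card = S.card + 1 := card_insert_of_notMem ha
  have h2 : (insert a S).card ≤ n := card_le _
  have h3 : n - S.card = (n - (insert a S).card) + 1 := by omega
  rw [h3, pow_succ]; ring

lemma eff_insert_of_true {S : Finset (Fin n)} {a : Fin n} (ha : a ∉ S) (hva : v a = true) :
    effProb (DOC B) v S true ≤ effProb (DOC B) v (insert a S) true := by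
  have hkey : (NY B v S).card ≤ 2 * (NY B v (insert a S)).card := by
    rw [NY_insert, NY_split B v S a]
    simp only [hva]
    have := NY_flip_le B v ha
    linarith
  rw [eff_cmp B v ha, effProb_eq]
  have hx : (0:ℝ) < 2 ^ (n - (insert a S).card) := by positivity
  rw [div_le_div_iff₀ (by positivity) hx]
  have hc : ((NY B v S).card : ℝ) ≤ 2 * (NY B v (insert a S)).card := by exact_mod_cast hkey
  nlinarith [hx.le]

lemma eff_le_erase {S : Finset (Fin n)} {i : Fin n} (hi : i ∈ S) (hvi : v i = false) :
    effProb (DOC B) v S true ≤ effProb (DOC B) v (S.erase i) true := by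
  set T := S.erase i with hT
  have hiT : i ∉ T := Finset.notMem_erase i S
  have hins : insert i T = S := Finset.insert_erase hi
  have hkey : 2 * (NY B v S).card ≤ (NY B v T).card := by
    rw [← hins, NY_insert, NY_split B v T i]
    simp only [hvi]
    have := NY_flip_le B v hiT
    linarith
  rw [eff_cmp B v hiT, hins, effProb_eq]
  have hx : (0:ℝ) < 2 ^ (n - S.card) := by positivity
  rw [div_le_div_iff₀ hx (by positivity)]
  have hc : 2 * ((NY B v S).card : ℝ) ≤ (NY B v T).card := by exact_mod_cast hkey
  nlinarith [hx.le]

end DocAux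

namespace DocAux

variable {n K : ℕ} (B : Fin K → Finset (Fin n)) (v : Fin n → Bool)

lemma eff_insert_strict
    (hBne : ∀ j, (B j).Nonempty)
    (hBdisj : ∀ j j', j ≠ j' → Disjoint (B j) (B j'))
    (hBcover : ∀ i : Fin n, ∃ j, i ∈ B j)
    {Sb S : Finset (Fin n)} {a : Fin n} (ha : a ∉ S)
    (hsub : insert a S ⊆ Sb) (hv1 : ∀ i ∈ Sb, v i = true)
    (hnb : ∀ j, ¬ B j ⊆ Sb) :
    effProb (DOC B) v S true < effProb (DOC B) v (insert a S) true := by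
  have hva : v a = true := hv1 a (hsub (mem_insert_self a S))
  obtain ⟨j₀, hj₀⟩ := hBcover a
  -- witness
  set w : Fin n → Bool := fun k => decide (k ∈ insert a (S ∪ B j₀)) with hwdef
  have hw : w ∈ (NY B v S).filter fun u => u a = true := by
    simp only [mem_filter, NY, mem_univ, true_and]
    refine ⟨⟨?_, ?_⟩, ?_⟩
    · intro i hi
      have : w i = true := by simp [hwdef, hi]
      rw [this, hv1 i (hsub (mem_insert_of_mem hi))]
    · rw [doc_iff]
      exact ⟨j₀, fun k hk => by simp [hwdef, hk]⟩
    · simp [hwdef]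
  have hw2 : DOC B (Function.update w a false) = false := by
    by_contra h
    have h' : DOC B (Function.update w a false) = true := by
      cases hco : DOC B (Function.update w a false)
      · exact absurd hco h
      · rfl
    rw [doc_iff] at h'
    obtain ⟨j', hj'⟩ := h'
    by_cases hjj : j' = j₀
    · subst hjj
      have := hj' a hj₀
      rw [Function.update_self] at this
      exact absurd this (by simp)
    · apply hnb j'
      intro k hk
      have hk' := hj' k hk
      have hka : k ≠ a := by
        rintro rfl
        rw [Function.update_self] at hk'
        exact absurd hk' (by simp)
      rw [Function.update_of_ne hka] at hk'
      have hkW : k ∈ insert a (S ∪ B j₀) := by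
        simpa [hwdef] using hk'
      rcases mem_insert.mp hkW with h1 | h2
      · exact absurd h1 hka
      · rcases mem_union.mp h2 with h3 | h4
        · exact hsub (mem_insert_of_mem h3)
        · have hd := hBdisj j' j₀ hjj
          rw [Finset.disjoint_left] at hd
          exact absurd h4 (hd hk)
  have hkey : (NY B v S).card < 2 * (NY B v (insert a S)).card := by
    rw [NY_insert, NY_split B v S a]
    simp only [hva]
    have := NY_flip_lt B v ha hw hw2
    linarith
  rw [eff_cmp B v ha, effProb_eq]
  have hx : (0:ℝ) < 2 ^ (n - (insert a S).card) := by positivity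
  rw [div_lt_div_iff₀ (by positivity) hx]
  have hc : ((NY B v S).card : ℝ) < 2 * (NY B v (insert a S)).card := by exact_mod_cast hkey
  nlinarith [hx.le]

lemma eff_mono_chain {Sb : Finset (Fin n)} (hv1 : ∀ i ∈ Sb, v i = true) :
    ∀ k (T : Finset (Fin n)), T ⊆ Sb → (Sb \ T).card = k →
      effProb (DOC B) v T true ≤ effProb (DOC B) v Sb true := by
  intro k
  induction k with
  | zero =>
    intro T hT h0
    have h1 : Sb \ T = ∅ := card_eq_zero.mp h0
    have h2 : T = Sb :=
      Finset.Subset.antisymm hT (Finset.sdiff_eq_empty_iff_subset.mp h1)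
    rw [h2]
  | succ k ih =>
    intro T hT hc
    have hne : (Sb \ T).Nonempty := Finset.card_pos.mp (by omega)
    obtain ⟨a, hamem⟩ := hne
    have haS : a ∈ Sb := (mem_sdiff.mp hamem).1
    have haT : a ∉ T := (mem_sdiff.mp hamem).2
    have step := eff_insert_of_true B v haT (hv1 a haS)
    have hsub : insert a T ⊆ Sb := Finset.insert_subset haS hT
    have hcard : (Sb \ insert a T).card = k := by
      rw [Finset.sdiff_insert, Finset.card_erase_of_mem hamem, hc]
      omega
    exact step.trans (ih _ hsub hcard)

lemma eff_strict_all
    (hBne : ∀ j, (B j).Nonempty)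
    (hBdisj : ∀ j j', j ≠ j' → Disjoint (B j) (B j'))
    (hBcover : ∀ i : Fin n, ∃ j, i ∈ B j)
    {S T : Finset (Fin n)} (hT : T ⊂ S)
    (hv1 : ∀ i ∈ S, v i = true) (hnb : ∀ j, ¬ B j ⊆ S) :
    effProb (DOC B) v T true < effProb (DOC B) v S true := by
  obtain ⟨a, haS, haT⟩ := Finset.exists_of_ssubset hT
  have hsub : insert a T ⊆ S := Finset.insert_subset haS hT.subset
  have step := eff_insert_strict B v hBne hBdisj hBcover haT hsub hv1 hnb
  exact step.trans_le (eff_mono_chain B v hv1 _ _ hsub rfl)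

lemma eff_block_one {j : Fin K} (hj1 : ∀ i ∈ B j, v i = true) :
    effProb (DOC B) v (B j) true = 1 := by
  apply eff_eq_one
  intro u hu
  simp only [Ag, mem_filter, mem_univ, true_and] at hu
  rw [doc_iff]
  exact ⟨j, fun k hk => (hu k hk).trans (hj1 k hk)⟩

lemma eff_lt_one_of_ssub_block
    (hBne : ∀ j, (B j).Nonempty)
    (hBdisj : ∀ j j', j ≠ j' → Disjoint (B j) (B j'))
    {j : Fin K} {T : Finset (Fin n)} (hT : T ⊂ B j) (hv1 : ∀ i ∈ B j, v i = true) :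
    effProb (DOC B) v T true < 1 := by
  apply eff_lt_one
  refine ⟨fun k => decide (k ∈ T), ?_, ?_⟩
  · simp only [Ag, mem_filter, mem_univ, true_and]
    intro i hi
    simp only [hi, decide_eq_true_eq, decide_true]
    exact (hv1 i (hT.subset hi)).symm
  · by_contra h
    have h' : DOC B (fun k => decide (k ∈ T)) = true := by
      cases hco : DOC B (fun k => decide (k ∈ T))
      · exact absurd hco h
      · rfl
    rw [doc_iff] at h'
    obtain ⟨j', hj'⟩ := h'
    have hsubT : B j' ⊆ T := by
      intro k hk
      have := hj' k hk
      simpa using this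
    by_cases hjj : j' = j
    · subst hjj
      exact hT.not_subset hsubT
    · obtain ⟨x, hx⟩ := hBne j'
      have hx1 : x ∈ B j := hT.subset (hsubT hx)
      have := hBdisj j' j hjj
      rw [Finset.disjoint_left] at this
      exact this hx hx1

end DocAux

/-- For a DOC gate with at least one block all-ones in `v` (so `Y = 1`), a nonempty occurrence
`v|S` has actual effect `{Y = 1}` (`α_e > 0`) iff all inputs fixed by `S` are in state `1` and
either `S` contains no complete block or `S` equals a single block. Every other nonempty
occurrence — in particular any occurrence fixing an input to `0`, and any all-ones occurrence
properly containing a complete block (overdetermination) — is reducible (`α_e ≤ 0`). -/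
theorem doc_actual_effects_of_on_state (n K : ℕ) (hK : 1 ≤ K)
    (B : Fin K → Finset (Fin n)) (hBne : ∀ j, (B j).Nonempty)
    (hBdisj : ∀ j j', j ≠ j' → Disjoint (B j) (B j'))
    (hBcover : ∀ i : Fin n, ∃ j, i ∈ B j)
    (v : Fin n → Bool) (hv : ∃ j, ∀ i ∈ B j, v i = true)
    (S : Finset (Fin n)) (hS : S.Nonempty) :
    (0 < alphaE (DOC B) v S hS true ↔
      (∀ i ∈ S, v i = true) ∧ ((∀ j, ¬ B j ⊆ S) ∨ ∃ j, S = B j)) ∧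
    (¬ ((∀ i ∈ S, v i = true) ∧ ((∀ j, ¬ B j ⊆ S) ∨ ∃ j, S = B j)) →
      alphaE (DOC B) v S hS true ≤ 0) := by

  classical
  open DocAux in
  have hvtrue : DOC B v = true := (doc_iff B v).mpr hv
  set D : ℝ := S.ssubsets.sup' ⟨∅, Finset.empty_mem_ssubsets hS⟩
    (fun T => effProb (DOC B) v T true) with hDdef
  have halpha : alphaE (DOC B) v S hS true =
      Real.logb 2 (effProb (DOC B) v S true / D) := rfl
  have hD0 : 0 < D := by
    have hpos : 0 < effProb (DOC B) v (∅ : Finset (Fin n)) true :=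
      eff_pos B v ∅ ⟨v, fun i hi => absurd hi (Finset.notMem_empty i), hvtrue⟩
    refine hpos.trans_le ?_
    rw [hDdef]
    exact Finset.le_sup' (fun T => effProb (DOC B) v T true) (Finset.empty_mem_ssubsets hS)
  have hpos : ((∀ i ∈ S, v i = true) ∧ ((∀ j, ¬ B j ⊆ S) ∨ ∃ j, S = B j)) →
      0 < alphaE (DOC B) v S hS true := by
    rintro ⟨hv1, hcase⟩
    have hlt : ∀ T ∈ S.ssubsets, effProb (DOC B) v T true < effProb (DOC B) v S true := by
      intro T hT
      rw [Finset.mem_ssubsets] at hT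
      rcases hcase with hnb | ⟨j, rfl⟩
      · exact eff_strict_all B v hBne hBdisj hBcover hT hv1 hnb
      · calc effProb (DOC B) v T true < 1 :=
              eff_lt_one_of_ssub_block B v hBne hBdisj hT hv1
          _ = effProb (DOC B) v (B j) true := (eff_block_one B v hv1).symm
    have hDlt : D < effProb (DOC B) v S true := by
      rw [hDdef]
      exact (Finset.sup'_lt_iff _).mpr hlt
    rw [halpha]
    exact Real.logb_pos (by norm_num) ((one_lt_div hD0).mpr hDlt)
  have hneg : ¬ ((∀ i ∈ S, v i = true) ∧ ((∀ j, ¬ B j ⊆ S) ∨ ∃ j, S = B j)) →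
      alphaE (DOC B) v S hS true ≤ 0 := by
    intro h
    suffices hle : effProb (DOC B) v S true ≤ D by
      rw [halpha]
      exact Real.logb_nonpos (by norm_num)
        (div_nonneg (eff_nonneg B v S) hD0.le) ((div_le_one hD0).mpr hle)
    by_cases hv1 : ∀ i ∈ S, v i = true
    · have hcase : ¬ ((∀ j, ¬ B j ⊆ S) ∨ ∃ j, S = B j) := fun hc => h ⟨hv1, hc⟩
      push_neg at hcase
      obtain ⟨⟨j, hBj⟩, hne'⟩ := hcase
      have hssub : B j ⊂ S := hBj.ssubset_of_ne (fun hh => hne' j hh.symm)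
      calc effProb (DOC B) v S true ≤ 1 := eff_le_one B v S
        _ = effProb (DOC B) v (B j) true :=
            (eff_block_one B v (fun i hi => hv1 i (hBj hi))).symm
        _ ≤ D := by
            rw [hDdef]
            exact Finset.le_sup' (fun T => effProb (DOC B) v T true)
              (Finset.mem_ssubsets.mpr hssub)
    · push_neg at hv1
      obtain ⟨i, hiS, hvi⟩ := hv1
      have hvif : v i = false := by
        cases hvv : v i
        · rfl
        · exact absurd hvv hvi
      calc effProb (DOC B) v S true ≤ effProb (DOC B) v (S.erase i) true :=
            eff_le_erase B v hiS hvif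
        _ ≤ D := by
            rw [hDdef]
            exact Finset.le_sup' (fun T => effProb (DOC B) v T true)
              (Finset.mem_ssubsets.mpr (Finset.erase_ssubset hiS))
  refine ⟨⟨fun hα => ?_, hpos⟩, hneg⟩
  by_contra hP
  linarith [hneg hP]
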